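/- arXiv:2501.03922 — 2 statements merged into one kernel-verified Lean document; each statement's English description precedes it below -/
import Mathlib

section
/- Let f : F_2^{n-1} → F_2^m be a quadratic APN function, L : F_2^{n-1} → F_2^m linear, c ∈ F_2^m, and suppose g(x) := f(x) + L(x) + c is also APN. Fix e₀ ∈ F_2^n \ F_2^{n-1} and define F : F_2^n → F_2^m by F(x) = f(x) and F(x+e₀) = f(x)+L(x)+c for x ∈ F_2^{n-1}. Then F is APN if and only if for every A ∈ F_2^{n-1}, the map x ↦ L(x) + B_f(x, A) from F_2^{n-1} to F_2^m is injective, where B_f(x,A) = f(x+A)+f(x)+f(A)+f(0). -/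
/-- `f` is almost perfect nonlinear. -/
def IsAPN {V W : Type*} [AddCommGroup V] [AddCommGroup W] (f : V → W) : Prop :=
  ∀ a : V, a ≠ 0 → ∀ b : W, {x : V | f (x + a) + f x = b}.ncard ≤ 2

/-- `B_f(x,y) = f(x+y) + f(x) + f(y) + f(0)`. -/
def Bf {V W : Type*} [AddCommGroup V] [AddCommGroup W] (f : V → W) (x y : V) : W :=
  f (x + y) + f x + f y + f 0

/-- `f` is quadratic: `B_f` is `F_2`-bilinear (additive in each argument;
it is symmetric by definition). -/
def IsQuadratic {V W : Type*} [AddCommGroup V] [AddCommGroup W] (f : V → W) : Prop :=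
  ∀ x₁ x₂ y : V, Bf f (x₁ + x₂) y = Bf f x₁ y + Bf f x₂ y

/- `F_2^n` is identified with `F_2^{n-1} × F_2`, the hyperplane `F_2^{n-1}` being
`F_2^{n-1} × {0}` and `e₀ = (0,1)`. -/
theorem stmt7 (n m : ℕ)
    (f : (Fin (n - 1) → ZMod 2) → (Fin m → ZMod 2))
    (hfq : IsQuadratic f) (hfAPN : IsAPN f)
    (L : (Fin (n - 1) → ZMod 2) →ₗ[ZMod 2] (Fin m → ZMod 2))
    (c : Fin m → ZMod 2)
    (hgAPN : IsAPN (fun x => f x + L x + c))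
    (F : ((Fin (n - 1) → ZMod 2) × ZMod 2) → (Fin m → ZMod 2))
    (hF0 : ∀ x, F (x, 0) = f x)
    (hF1 : ∀ x, F (x, 1) = f x + L x + c) :
    IsAPN F ↔
      ∀ A : Fin (n - 1) → ZMod 2,
        Function.Injective (fun x => L x + Bf f x A) := by
  classical
  have hW2 : ∀ w : Fin m → ZMod 2, w + w = 0 := by
    intro w; funext i
    have h : ∀ x : ZMod 2, x + x = 0 := by decide
    exact h (w i)
  have hV2 : ∀ v : Fin (n - 1) → ZMod 2, v + v = 0 := by
    intro v; funext i
    have h : ∀ x : ZMod 2, x + x = 0 := by decide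
    exact h (v i)
  have hZcases : ∀ δ : ZMod 2, δ = 0 ∨ δ = 1 := by decide
  have hZpigeon : ∀ d1 d2 d3 : ZMod 2, d1 = d2 ∨ d1 = d3 ∨ d2 = d3 := by decide
  have hBsymm : ∀ x y, Bf f x y = Bf f y x := by
    intro x y; unfold Bf; rw [add_comm x y]; ring
  have hB0 : ∀ y, Bf f 0 y = 0 := by
    intro y; unfold Bf; rw [zero_add]
    linear_combination hW2 (f y) + hW2 (f 0)
  have hker : ∀ a : Fin (n - 1) → ZMod 2, a ≠ 0 → ∀ t, Bf f t a = 0 → t = 0 ∨ t = a := by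
    intro a ha t ht
    by_contra hcon
    push_neg at hcon
    obtain ⟨ht0, hta⟩ := hcon
    have hcard := hfAPN a ha (f a + f 0)
    have hmem0 : (0 : Fin (n - 1) → ZMod 2) ∈ {x | f (x + a) + f x = f a + f 0} := by
      simp [zero_add]
    have hmema : a ∈ {x | f (x + a) + f x = f a + f 0} := by
      simp only [Set.mem_setOf_eq, hV2 a]
      exact add_comm (f 0) (f a)
    have hmemt : t ∈ {x | f (x + a) + f x = f a + f 0} := by
      simp only [Set.mem_setOf_eq]
      unfold Bf at ht
      linear_combination ht - hW2 (f a) - hW2 (f 0)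
    have h3 : 2 < {x | f (x + a) + f x = f a + f 0}.ncard :=
      (Set.two_lt_ncard (Set.toFinite _)).mpr
        ⟨t, hmemt, 0, hmem0, a, hmema, ht0, hta, Ne.symm ha⟩
    omega
  have hP2 : ∀ a : Fin (n - 1) → ZMod 2, a ≠ 0 → ∀ x y, x ≠ y →
      f (x + a) + f x = f (y + a) + f y → y = x + a := by
    intro a ha x y hne hxy
    have hBt : Bf f (x + y) a = 0 := by
      rw [hfq x y a]; unfold Bf
      linear_combination hxy + hW2 (f (y + a)) + hW2 (f y) + hW2 (f a) + hW2 (f 0)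
    rcases hker a ha (x + y) hBt with h | h
    · exact absurd (show x = y by linear_combination h - hV2 y) hne
    · linear_combination h - hV2 x
  constructor
  · -- APN → injectivity
    intro hAPN A x1 x2 hx
    by_contra hne
    have hx' : L x1 + Bf f x1 A = L x2 + Bf f x2 A := hx
    have hzne : x1 + x2 ≠ 0 := fun h => hne (by linear_combination h - hV2 x2)
    have h1 : Bf f (x1 + x2) A = L (x1 + x2) := by
      rw [hfq x1 x2 A, map_add]
      linear_combination hx' + hW2 (Bf f x2 A) - hW2 (L x1)
    have hLz : f (A + (x1 + x2)) + f A + f (x1 + x2) + f 0 = L (x1 + x2) := by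
      have h2 : Bf f A (x1 + x2) = L (x1 + x2) := (hBsymm A (x1 + x2)).trans h1
      unfold Bf at h2; exact h2
    have hzp : (((x1 + x2 : Fin (n - 1) → ZMod 2), (0 : ZMod 2)) :
        (Fin (n - 1) → ZMod 2) × ZMod 2) ≠ 0 :=
      fun h => hzne (congrArg Prod.fst h)
    have hcard := hAPN (x1 + x2, 0) hzp (f (x1 + x2) + f 0)
    have hm1 : ((0, 0) : (Fin (n - 1) → ZMod 2) × ZMod 2) ∈
        {X | F (X + (x1 + x2, 0)) + F X = f (x1 + x2) + f 0} := by
      simp only [Set.mem_setOf_eq, Prod.mk_add_mk, zero_add, add_zero, hF0]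
    have hm2 : (((x1 + x2 : Fin (n - 1) → ZMod 2), (0 : ZMod 2)) :
        (Fin (n - 1) → ZMod 2) × ZMod 2) ∈
        {X | F (X + (x1 + x2, 0)) + F X = f (x1 + x2) + f 0} := by
      simp only [Set.mem_setOf_eq, Prod.mk_add_mk, add_zero, hF0]
      rw [hV2 (x1 + x2)]
      exact add_comm _ _
    have hm3 : ((A, 1) : (Fin (n - 1) → ZMod 2) × ZMod 2) ∈
        {X | F (X + (x1 + x2, 0)) + F X = f (x1 + x2) + f 0} := by
      simp only [Set.mem_setOf_eq, Prod.mk_add_mk, add_zero, hF1]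
      rw [map_add]
      linear_combination hLz + hW2 (L A) + hW2 (L (x1 + x2)) + hW2 c
        - hW2 (f (x1 + x2)) - hW2 (f 0)
    have d1 : ((0, 0) : (Fin (n - 1) → ZMod 2) × ZMod 2) ≠ (x1 + x2, 0) :=
      fun h => hzne (congrArg Prod.fst h).symm
    have d2 : ((0, 0) : (Fin (n - 1) → ZMod 2) × ZMod 2) ≠ (A, 1) :=
      fun h => absurd (show (0 : ZMod 2) = 1 from congrArg Prod.snd h) (by decide)
    have d3 : (((x1 + x2 : Fin (n - 1) → ZMod 2), (0 : ZMod 2)) :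
        (Fin (n - 1) → ZMod 2) × ZMod 2) ≠ (A, 1) :=
      fun h => absurd (show (0 : ZMod 2) = 1 from congrArg Prod.snd h) (by decide)
    have h3 : 2 < {X | F (X + (x1 + x2, 0)) + F X = f (x1 + x2) + f 0}.ncard :=
      (Set.two_lt_ncard (Set.toFinite _)).mpr ⟨_, hm1, _, hm2, _, hm3, d1, d2, d3⟩
    omega
  · -- injectivity → APN
    intro hinj A hA b
    by_contra hle
    push_neg at hle
    obtain ⟨X1, h1, X2, h2, X3, h3, h12, h13, h23⟩ :=
      (Set.two_lt_ncard (Set.toFinite _)).mp hle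
    obtain ⟨a, ε⟩ := A
    obtain ⟨x1, δ1⟩ := X1
    obtain ⟨x2, δ2⟩ := X2
    obtain ⟨x3, δ3⟩ := X3
    simp only [Set.mem_setOf_eq, Prod.mk_add_mk] at h1 h2 h3
    rcases hZcases ε with rfl | rfl
    · -- ε = 0
      have ha : a ≠ 0 := by
        rintro rfl
        exact hA rfl
      have hP1 : ∀ x y, f (x + a) + f x + L a = f (y + a) + f y → False := by
        intro x y hxy
        have hBt : Bf f (x + y) a = L a := by
          rw [hfq x y a]; unfold Bf
          linear_combination hxy + hW2 (f (y + a)) + hW2 (f y) + hW2 (f a)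
            + hW2 (f 0) - hW2 (L a)
        have hstep : a = 0 := by
          apply hinj (x + y)
          show L a + Bf f a (x + y) = L 0 + Bf f 0 (x + y)
          rw [hBsymm a (x + y), hBt, map_zero, hB0]
          linear_combination hW2 (L a)
        exact ha hstep
      have hkey : ∀ (δ δ' : ZMod 2) x y, F (x + a, δ) + F (x, δ) = b →
          F (y + a, δ') + F (y, δ') = b →
          ((x, δ) : (Fin (n - 1) → ZMod 2) × ZMod 2) ≠ (y, δ') →
          δ = δ' ∧ y = x + a := by
        intro δ δ' x y hx hy hne
        rcases hZcases δ with rfl | rfl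
        · rcases hZcases δ' with rfl | rfl
          · simp only [hF0] at hx hy
            have hxyne : x ≠ y := fun h => hne (by rw [h])
            exact ⟨rfl, hP2 a ha x y hxyne (hx.trans hy.symm)⟩
          · simp only [hF1] at hy
            simp only [hF0] at hx
            rw [map_add] at hy
            exact absurd (show f (y + a) + f y + L a = f (x + a) + f x by
              linear_combination hy - hx - hW2 (L y) - hW2 c) (fun h => hP1 y x h)
        · rcases hZcases δ' with rfl | rfl
          · simp only [hF1] at hx
            simp only [hF0] at hy
            rw [map_add] at hx
            exact absurd (show f (x + a) + f x + L a = f (y + a) + f y by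
              linear_combination hx - hy - hW2 (L x) - hW2 c) (fun h => hP1 x y h)
          · simp only [hF1] at hx hy
            rw [map_add] at hx hy
            have hxyne : x ≠ y := fun h => hne (by rw [h])
            have heq : f (x + a) + f x = f (y + a) + f y := by
              linear_combination hx - hy - hW2 (L x) + hW2 (L y)
            exact ⟨rfl, hP2 a ha x y hxyne heq⟩
      simp only [add_zero] at h1 h2 h3
      obtain ⟨e12, hx12⟩ := hkey δ1 δ2 x1 x2 h1 h2 h12
      obtain ⟨e13, hx13⟩ := hkey δ1 δ3 x1 x3 h1 h3 h13
      exact h23 (by rw [hx12, hx13, ← e12, ← e13])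
    · -- ε = 1
      have hQ : ∀ (δ : ZMod 2) x y, x ≠ y → F (x + a, δ + 1) + F (x, δ) = b →
          F (y + a, δ + 1) + F (y, δ) = b → False := by
        intro δ x y hne hx hy
        have key : L x + Bf f x a = L y + Bf f y a := by
          rcases hZcases δ with rfl | rfl
          · rw [zero_add] at hx hy
            rw [hF1, hF0] at hx hy
            rw [map_add] at hx hy
            unfold Bf
            linear_combination hx - hy
          · have h11 : (1 : ZMod 2) + 1 = 0 := by decide
            rw [h11] at hx hy
            rw [hF0, hF1] at hx hy
            unfold Bf
            linear_combination hx - hy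
        exact hne (hinj a key)
      rcases hZpigeon δ1 δ2 δ3 with h | h | h
      · subst h
        have hne : x1 ≠ x2 := fun he => h12 (by rw [he])
        exact hQ δ1 x1 x2 hne h1 h2
      · subst h
        have hne : x1 ≠ x3 := fun he => h13 (by rw [he])
        exact hQ δ1 x1 x3 hne h1 h3
      · subst h
        have hne : x2 ≠ x3 := fun he => h23 (by rw [he])
        exact hQ δ2 x2 x3 hne h2 h3
end

section
/- Let F be a quadratic APN function on F_{2^n}, L an F_2-linear map on F_{2^n}, and e₀ ∈ F_{2^n} with Tr(e₀) = 1. Then G(x) := F(x) + Tr(x)·L(x) is a (quadratic) APN function on F_{2^n} if and only if for every a ∈ T₀ := {x : Tr(x) = 0}, the map L_a : T₀ → F_{2^n} defined by L_a(x) = L(x) + B_F(x, a + e₀) is injective, where B_F(x,y) = F(x+y)+F(x)+F(y)+F(0). -/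
noncomputable def Tr (n : ℕ) : GaloisField 2 n → ZMod 2 :=
  Algebra.trace (ZMod 2) (GaloisField 2 n)

section aux

variable {n : ℕ}

lemma zmod2 (t : ZMod 2) : t = 0 ∨ t = 1 := by revert t; decide

lemma gf_two_eq_zero : (2 : GaloisField 2 n) = 0 := CharTwo.two_eq_zero

lemma addself (x : GaloisField 2 n) : x + x = 0 := CharTwo.add_self_eq_zero x

lemma Tr_add (x y : GaloisField 2 n) : Tr n (x + y) = Tr n x + Tr n y := map_add _ _ _

lemma Tr_zero : Tr n (0 : GaloisField 2 n) = 0 := map_zero _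

lemma Bf_symm {f : GaloisField 2 n → GaloisField 2 n} (x y : GaloisField 2 n) :
    Bf f x y = Bf f y x := by
  simp only [Bf, add_comm x y]; ring

lemma Bf_zero {f : GaloisField 2 n → GaloisField 2 n} (y : GaloisField 2 n) :
    Bf f 0 y = 0 := by
  simp only [Bf, zero_add]
  linear_combination (f y + f 0) * (gf_two_eq_zero (n := n))

lemma Bf_self {f : GaloisField 2 n → GaloisField 2 n} (a : GaloisField 2 n) :
    Bf f a a = 0 := by
  simp only [Bf, addself]
  linear_combination (f a + f 0) * (gf_two_eq_zero (n := n))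

/-- kernel condition implies fibers of the derivative have at most two points -/
lemma fibers_le {f : GaloisField 2 n → GaloisField 2 n} (hq : IsQuadratic f)
    (a : GaloisField 2 n)
    (hker : ∀ x, Bf f x a = 0 → x = 0 ∨ x = a) (b : GaloisField 2 n) :
    {x : GaloisField 2 n | f (x + a) + f x = b}.ncard ≤ 2 := by
  set S := {x : GaloisField 2 n | f (x + a) + f x = b} with hS
  rcases S.eq_empty_or_nonempty with h | ⟨x₀, hx₀⟩
  · simp [h]
  · have hsub : S ⊆ {x₀, x₀ + a} := by
      intro x hx
      have hxS : f (x + a) + f x = b := hx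
      have hx₀S : f (x₀ + a) + f x₀ = b := hx₀
      have hsum : Bf f (x + x₀) a = 0 := by
        rw [hq x x₀ a]
        have e1 : Bf f x a = b + f a + f 0 := by rw [Bf, hxS]
        have e2 : Bf f x₀ a = b + f a + f 0 := by rw [Bf, hx₀S]
        rw [e1, e2]
        linear_combination (b + f a + f 0) * (gf_two_eq_zero (n := n))
      simp only [Set.mem_insert_iff, Set.mem_singleton_iff]
      rcases hker _ hsum with h0 | ha
      · left; linear_combination h0 - x₀ * (gf_two_eq_zero (n := n))
      · right; linear_combination ha - x₀ * (gf_two_eq_zero (n := n))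
    calc S.ncard ≤ ({x₀, x₀ + a} : Set (GaloisField 2 n)).ncard :=
          Set.ncard_le_ncard hsub (Set.toFinite _)
      _ ≤ 2 := by
          apply le_trans (Set.ncard_insert_le _ _)
          simp

/-- APN implies kernel condition -/
lemma ker_of_apn {f : GaloisField 2 n → GaloisField 2 n} (hapn : IsAPN f)
    (a : GaloisField 2 n) (ha : a ≠ 0) (x : GaloisField 2 n) (hx : Bf f x a = 0) :
    x = 0 ∨ x = a := by
  by_contra h
  push_neg at h
  obtain ⟨h0, hxa⟩ := h
  set S := {z : GaloisField 2 n | f (z + a) + f z = f a + f 0} with hS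
  have hmem0 : (0 : GaloisField 2 n) ∈ S := by
    simp only [hS, Set.mem_setOf_eq, zero_add]
  have hmema : a ∈ S := by
    simp only [hS, Set.mem_setOf_eq, addself]; rw [add_comm]
  have hmemx : x ∈ S := by
    simp only [hS, Set.mem_setOf_eq]
    rw [Bf] at hx
    linear_combination hx - (f a + f 0) * (gf_two_eq_zero (n := n))
  have hsub : ({0, a, x} : Set (GaloisField 2 n)) ⊆ S := by
    intro z hz; rcases hz with rfl | rfl | rfl <;> assumption
  have hcard : ({0, a, x} : Set (GaloisField 2 n)).ncard = 3 := by
    rw [Set.ncard_insert_of_notMem (by simp [Ne.symm ha, Ne.symm h0]) (Set.toFinite _),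
        Set.ncard_insert_of_notMem (by simpa using Ne.symm hxa) (Set.toFinite _),
        Set.ncard_singleton]
  have hle := Set.ncard_le_ncard hsub (Set.toFinite _)
  have hA := hapn a ha (f a + f 0)
  rw [← hS] at hA
  omega

end aux

theorem stmt8 (n : ℕ)
    (F : GaloisField 2 n → GaloisField 2 n)
    (hFq : IsQuadratic F) (hFAPN : IsAPN F)
    (L : GaloisField 2 n →ₗ[ZMod 2] GaloisField 2 n)
    (e₀ : GaloisField 2 n) (he₀ : Tr n e₀ = 1)
    (G : GaloisField 2 n → GaloisField 2 n)
    (hG : ∀ x, G x = F x + Tr n x • L x) :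
    (IsQuadratic G ∧ IsAPN G) ↔
      ∀ a : GaloisField 2 n, Tr n a = 0 →
        Set.InjOn (fun x => L x + Bf F x (a + e₀)) {x : GaloisField 2 n | Tr n x = 0} := by
  have h2 : (2 : GaloisField 2 n) = 0 := CharTwo.two_eq_zero
  -- structure of Bf G
  have hBG : ∀ x y, Bf G x y = Bf F x y + Tr n x • L y + Tr n y • L x := by
    intro x y
    simp only [Bf, hG, Tr_add, Tr_zero, map_add, zero_smul, add_zero]
    rcases zmod2 (Tr n x) with hx | hx <;> rcases zmod2 (Tr n y) with hy | hy <;>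
      simp only [hx, hy, zero_add, add_zero, zero_smul, one_smul, smul_add,
        (show (1 : ZMod 2) + 1 = 0 by decide)]
    · linear_combination (L y : GaloisField 2 n) * h2
    · linear_combination (L x : GaloisField 2 n) * h2
    · ring
  have hGq : IsQuadratic G := by
    intro x₁ x₂ y
    rw [hBG, hBG, hBG, hFq, Tr_add, map_add, add_smul, smul_add]
    abel
  constructor
  · rintro ⟨_, hGAPN⟩ a ha x hx y hy hxy
    simp only [Set.mem_setOf_eq] at hx hy
    simp only at hxy
    set b := a + e₀ with hb
    have hTrb : Tr n b = 1 := by rw [hb, Tr_add, ha, zero_add, he₀]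
    have hbne : b ≠ 0 := by
      intro hh; rw [hh, Tr_zero] at hTrb; exact absurd hTrb (by decide)
    set z := x + y with hz
    have hTrz : Tr n z = 0 := by rw [hz, Tr_add, hx, hy, add_zero]
    have hLz : L z + Bf F z b = 0 := by
      rw [hz, map_add, hFq]
      linear_combination hxy + (L y + Bf F y b) * h2
    have hBGz : Bf G z b = 0 := by
      rw [hBG, hTrz, hTrb, zero_smul, one_smul, add_zero]
      linear_combination hLz
    rcases ker_of_apn hGAPN b hbne z hBGz with h0 | hbz
    · linear_combination h0 - y * h2
    · exfalso
      rw [hbz] at hTrz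
      rw [hTrz] at hTrb
      exact absurd hTrb (by decide)
  · intro h
    refine ⟨hGq, ?_⟩
    intro a ha b
    apply fibers_le hGq
    intro x hx
    -- the hypothesis, in a convenient pointwise form
    have key : ∀ c, Tr n c = 0 → ∀ w, Tr n w = 0 → L w + Bf F w (c + e₀) = 0 → w = 0 := by
      intro c hc w hw hLw
      have h0mem : (0 : GaloisField 2 n) ∈ {x : GaloisField 2 n | Tr n x = 0} := by
        simp only [Set.mem_setOf_eq, Tr_zero]
      have := h c hc (show w ∈ {x : GaloisField 2 n | Tr n x = 0} from hw) h0mem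
      simp only [map_zero, Bf_zero, add_zero, zero_add] at this
      exact this hLw
    rcases zmod2 (Tr n a) with hTa | hTa
    · -- Tr a = 0, a ≠ 0
      rcases zmod2 (Tr n x) with hTx | hTx
      · -- Tr x = 0 : Bf G x a = Bf F x a
        have hBFx : Bf F x a = 0 := by
          rw [hBG, hTx, hTa, zero_smul, zero_smul, add_zero, add_zero] at hx
          exact hx
        exact ker_of_apn hFAPN a ha x hBFx
      · -- Tr x = 1 : contradiction via key with c = x + e₀, w = a
        exfalso
        have hxa : Bf F x a + L a = 0 := by
          rw [hBG, hTx, hTa, one_smul, zero_smul, add_zero] at hx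
          exact hx
        have hTxe : Tr n (x + e₀) = 0 := by
          rw [Tr_add, hTx, he₀]; decide
        have hxe : (x + e₀) + e₀ = x := by rw [add_assoc, addself, add_zero]
        exact ha (key (x + e₀) hTxe a hTa (by rw [hxe, Bf_symm]; linear_combination hxa))
    · -- Tr a = 1, use c = a + e₀
      have hTa' : Tr n (a + e₀) = 0 := by rw [Tr_add, hTa, he₀]; decide
      have hae : (a + e₀) + e₀ = a := by rw [add_assoc, addself, add_zero]
      rcases zmod2 (Tr n x) with hTx | hTx
      · -- Tr x = 0
        left
        have hLx : Bf F x a + L x = 0 := by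
          rw [hBG, hTx, hTa, zero_smul, one_smul, add_zero] at hx
          exact hx
        exact key (a + e₀) hTa' x hTx (by rw [hae]; linear_combination hLx)
      · -- Tr x = 1 : consider x + a
        right
        have hTxa : Tr n (x + a) = 0 := by rw [Tr_add, hTx, hTa]; decide
        have hxa0 : Bf G (x + a) a = 0 := by
          rw [hGq, hx, Bf_self, add_zero]
        have hLxa : Bf F (x + a) a + L (x + a) = 0 := by
          rw [hBG, hTxa, hTa, zero_smul, one_smul, add_zero] at hxa0
          exact hxa0
        have hz := key (a + e₀) hTa' (x + a) hTxa (by rw [hae]; linear_combination hLxa)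
        linear_combination hz - a * h2
end
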